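/- arXiv:2402.17603 — 2 statements merged into one kernel-verified Lean document; each statement's English description precedes it below -/
import Mathlib

section
/- Let A = Σ_{i=1}^n σ_i u_i v_iᵀ with σ_1 ≥ … ≥ σ_n ≥ 0, u_1,…,u_n ∈ ℝ^m orthonormal and v_1,…,v_n ∈ ℝ^n orthonormal, and let h ∈ {1,…,n−1}. Then A_h = Σ_{i=1}^h σ_i u_i v_iᵀ is a best rank-h approximation of A in the spectral norm: ‖A − A_h‖₂ = σ_{h+1}, and for every real m×n matrix B with rank(B) ≤ h one has ‖A − B‖₂ ≥ σ_{h+1}, where ‖·‖₂ denotes the operator norm induced by the Euclidean vector norms. -/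
open Matrix BigOperators
open scoped Matrix.Norms.L2Operator


lemma dot_sum_left {k n : ℕ} (v : Fin n → Fin k → ℝ) (S : Finset (Fin n)) (c : Fin n → ℝ)
    (x : Fin k → ℝ) : (∑ i ∈ S, c i • v i) ⬝ᵥ x = ∑ i ∈ S, c i * (v i ⬝ᵥ x) := by
  simp only [dotProduct, Finset.sum_apply, Pi.smul_apply, smul_eq_mul, Finset.sum_mul,
    Finset.mul_sum]
  rw [Finset.sum_comm]
  exact Finset.sum_congr rfl fun i _ => Finset.sum_congr rfl fun l _ => by ring

lemma dot_sum_ortho {k n : ℕ} (u : Fin n → Fin k → ℝ)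
    (hu : ∀ i j : Fin n, u i ⬝ᵥ u j = if i = j then (1 : ℝ) else 0)
    (S : Finset (Fin n)) (c d : Fin n → ℝ) :
    (∑ i ∈ S, c i • u i) ⬝ᵥ (∑ i ∈ S, d i • u i) = ∑ i ∈ S, c i * d i := by
  classical
  simp only [dotProduct, Finset.sum_apply, Pi.smul_apply, smul_eq_mul, Finset.sum_mul,
    Finset.mul_sum]
  rw [Finset.sum_comm]
  refine Finset.sum_congr rfl fun i hi => ?_
  rw [Finset.sum_comm]
  have key : ∀ j ∈ S, (∑ l, c j * u j l * (d i * u i l)) = c j * d i * (u j ⬝ᵥ u i) := by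
    intro j _
    simp only [dotProduct, Finset.mul_sum]
    exact Finset.sum_congr rfl fun l _ => by ring
  rw [Finset.sum_congr rfl key]
  simp only [hu, mul_ite, mul_one, mul_zero]
  rw [Finset.sum_eq_single i]
  · simp
  · intro j hj hne; simp [hne]
  · intro hi'; exact absurd hi hi'

lemma bessel {n : ℕ} (v : Fin n → Fin n → ℝ)
    (hv : ∀ i j : Fin n, v i ⬝ᵥ v j = if i = j then (1 : ℝ) else 0)
    (S : Finset (Fin n)) (x : Fin n → ℝ) :
    ∑ i ∈ S, (v i ⬝ᵥ x) ^ 2 ≤ x ⬝ᵥ x := by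
  set p : Fin n → ℝ := ∑ i ∈ S, (v i ⬝ᵥ x) • v i with hp
  have h1 : p ⬝ᵥ p = ∑ i ∈ S, (v i ⬝ᵥ x) ^ 2 := by
    rw [hp, dot_sum_ortho v hv]
    exact Finset.sum_congr rfl fun i _ => (sq _).symm
  have h2 : p ⬝ᵥ x = ∑ i ∈ S, (v i ⬝ᵥ x) ^ 2 := by
    rw [hp, dot_sum_left]
    exact Finset.sum_congr rfl fun i _ => (sq _).symm
  have h0 : 0 ≤ (x - p) ⬝ᵥ (x - p) :=
    Finset.sum_nonneg fun i _ => mul_self_nonneg _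
  have hexp : (x - p) ⬝ᵥ (x - p) = x ⬝ᵥ x - 2 * (p ⬝ᵥ x) + p ⬝ᵥ p := by
    rw [sub_dotProduct, dotProduct_sub, dotProduct_sub, dotProduct_comm x p]
    ring
  rw [hexp, h1, h2] at h0
  linarith

lemma sum_vecMulVec_mulVec {k n : ℕ} (u : Fin n → Fin k → ℝ) (v : Fin n → Fin n → ℝ)
    (σ : Fin n → ℝ) (S : Finset (Fin n)) (x : Fin n → ℝ) :
    (∑ i ∈ S, σ i • vecMulVec (u i) (v i)) *ᵥ x = ∑ i ∈ S, (σ i * (v i ⬝ᵥ x)) • u i := by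
  ext j
  simp only [mulVec, dotProduct, Finset.sum_apply, Pi.smul_apply, smul_eq_mul, vecMulVec_apply,
    Matrix.sum_apply, Matrix.smul_apply, Finset.sum_mul, Finset.mul_sum]
  rw [Finset.sum_comm]
  refine Finset.sum_congr rfl fun i hi => ?_
  exact Finset.sum_congr rfl fun l _ => by ring

lemma euclid_norm {k : ℕ} (y : EuclideanSpace ℝ (Fin k)) :
    ‖y‖ = Real.sqrt ((y : Fin k → ℝ) ⬝ᵥ (y : Fin k → ℝ)) := by
  rw [EuclideanSpace.norm_eq]
  congr 1
  simp [dotProduct, sq, Real.norm_eq_abs, abs_mul_abs_self]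

lemma opnorm_le {m n : ℕ} (M : Matrix (Fin m) (Fin n) ℝ) (c : ℝ) (hc : 0 ≤ c)
    (H : ∀ x : Fin n → ℝ, (M *ᵥ x) ⬝ᵥ (M *ᵥ x) ≤ c ^ 2 * (x ⬝ᵥ x)) : ‖M‖ ≤ c := by
  rw [Matrix.l2_opNorm_def]
  refine ContinuousLinearMap.opNorm_le_bound _ hc fun x => ?_
  have hx : ((Matrix.toEuclideanLin.trans LinearMap.toContinuousLinearMap M) x : Fin m → ℝ)
      = M *ᵥ (x : Fin n → ℝ) := rfl
  rw [euclid_norm, euclid_norm, hx]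
  calc Real.sqrt ((M *ᵥ x) ⬝ᵥ (M *ᵥ x)) ≤ Real.sqrt (c ^ 2 * ((x : Fin n → ℝ) ⬝ᵥ x)) :=
        Real.sqrt_le_sqrt (H x)
    _ = c * Real.sqrt ((x : Fin n → ℝ) ⬝ᵥ x) := by
        rw [Real.sqrt_mul (sq_nonneg c), Real.sqrt_sq hc]

lemma opnorm_mulVec {m n : ℕ} (M : Matrix (Fin m) (Fin n) ℝ) (x : Fin n → ℝ) :
    Real.sqrt ((M *ᵥ x) ⬝ᵥ (M *ᵥ x)) ≤ ‖M‖ * Real.sqrt (x ⬝ᵥ x) := by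
  have := M.l2_opNorm_mulVec ((WithLp.equiv 2 (Fin n → ℝ)).symm x)
  rw [euclid_norm, euclid_norm] at this
  exact this

set_option maxHeartbeats 1000000 in
/-- Eckart–Young: the rank-`h` SVD truncation `A_h` is a best rank-`h` approximation of `A`
in the spectral norm: `‖A − A_h‖₂ = σ_{h+1}`, and any `B` with `rank B ≤ h` satisfies
`‖A − B‖₂ ≥ σ_{h+1}`. -/
theorem svd_truncation_best_rank_approx {m n : ℕ}
    (u : Fin n → Fin m → ℝ) (v : Fin n → Fin n → ℝ) (σ : Fin n → ℝ)
    (hu : ∀ i j : Fin n, u i ⬝ᵥ u j = if i = j then (1 : ℝ) else 0)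
    (hv : ∀ i j : Fin n, v i ⬝ᵥ v j = if i = j then (1 : ℝ) else 0)
    (hσ : Antitone σ) (hσ0 : ∀ i, 0 ≤ σ i)
    (A : Matrix (Fin m) (Fin n) ℝ)
    (hA : A = ∑ i, σ i • vecMulVec (u i) (v i))
    (h : ℕ) (h1 : 1 ≤ h) (hlt : h < n)
    (Ah : Matrix (Fin m) (Fin n) ℝ)
    (hAh : Ah = ∑ i ∈ Finset.univ.filter (fun i : Fin n => (i : ℕ) < h),
        σ i • vecMulVec (u i) (v i)) :
    ‖A - Ah‖ = σ ⟨h, hlt⟩ ∧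
    ∀ B : Matrix (Fin m) (Fin n) ℝ, B.rank ≤ h → σ ⟨h, hlt⟩ ≤ ‖A - B‖ := by
  classical
  set ih : Fin n := ⟨h, hlt⟩ with hih
  set S : Finset (Fin n) := Finset.univ.filter (fun i : Fin n => ¬ (i : ℕ) < h) with hS
  have hdiff : A - Ah = ∑ i ∈ S, σ i • vecMulVec (u i) (v i) := by
    rw [hA, hAh, hS]
    rw [← Finset.sum_filter_add_sum_filter_not Finset.univ (fun i : Fin n => (i : ℕ) < h)]
    exact add_sub_cancel_left _ _
  -- general norm-squared formula
  have normsq : ∀ (T : Finset (Fin n)) (x : Fin n → ℝ),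
      ((∑ i ∈ T, σ i • vecMulVec (u i) (v i)) *ᵥ x) ⬝ᵥ
        ((∑ i ∈ T, σ i • vecMulVec (u i) (v i)) *ᵥ x)
      = ∑ i ∈ T, (σ i * (v i ⬝ᵥ x)) ^ 2 := by
    intro T x
    rw [sum_vecMulVec_mulVec, dot_sum_ortho u hu]
    exact Finset.sum_congr rfl fun i _ => (sq _).symm
  constructor
  · -- part 1
    apply le_antisymm
    · refine opnorm_le _ _ (hσ0 ih) fun x => ?_
      rw [hdiff, normsq]
      have step1 : ∑ i ∈ S, (σ i * (v i ⬝ᵥ x)) ^ 2 ≤ σ ih ^ 2 * ∑ i ∈ S, (v i ⬝ᵥ x) ^ 2 := by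
        rw [Finset.mul_sum]
        refine Finset.sum_le_sum fun i hi => ?_
        have hhi : ih ≤ i := by
          simp only [hS, Finset.mem_filter] at hi
          exact Fin.mk_le_of_le_val (Nat.le_of_not_lt hi.2)
        have hσle : σ i ≤ σ ih := hσ hhi
        have : σ i ^ 2 ≤ σ ih ^ 2 := pow_le_pow_left₀ (hσ0 i) hσle 2
        calc (σ i * (v i ⬝ᵥ x)) ^ 2 = σ i ^ 2 * (v i ⬝ᵥ x) ^ 2 := by ring
          _ ≤ σ ih ^ 2 * (v i ⬝ᵥ x) ^ 2 := by nlinarith [sq_nonneg (v i ⬝ᵥ x)]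
      refine step1.trans ?_
      exact mul_le_mul_of_nonneg_left (bessel v hv S x) (sq_nonneg _)
    · -- lower bound via x = v ih
      have hx := opnorm_mulVec (A - Ah) (v ih)
      rw [hdiff, normsq] at hx
      have hsum : ∑ i ∈ S, (σ i * (v i ⬝ᵥ v ih)) ^ 2 = σ ih ^ 2 := by
        rw [Finset.sum_eq_single ih]
        · rw [hv ih ih]; simp
        · intro i hi hne; rw [hv i ih]; simp [hne]
        · intro hmem
          exact absurd (Finset.mem_filter.mpr ⟨Finset.mem_univ _, by simp [hih]⟩) hmem
      have hxx : v ih ⬝ᵥ v ih = 1 := by rw [hv ih ih]; simp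
      rw [hsum] at hx
      rw [hxx] at hx
      rw [Real.sqrt_one, mul_one, Real.sqrt_sq (hσ0 ih)] at hx
      rw [hdiff]
      exact hx
  · intro B hrank
    -- orthonormal family of h+1 vectors
    have hh1 : h + 1 ≤ n := hlt
    set e : Fin (h+1) → Fin n := fun j => ⟨(j : ℕ), lt_of_lt_of_le j.isLt hh1⟩ with he
    have he_inj : Function.Injective e := by
      intro a b hab
      have hval := congrArg Fin.val hab
      simp only [he] at hval
      exact Fin.ext hval
    set w : Fin (h+1) → (Fin n → ℝ) := fun j => v (e j) with hw
    have hw_ortho : ∀ a b, w a ⬝ᵥ w b = if a = b then (1:ℝ) else 0 := by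
      intro a b
      rw [hw]
      simp only []
      rw [hv (e a) (e b)]
      by_cases hab : a = b
      · simp [hab]
      · have : e a ≠ e b := fun hc' => hab (he_inj hc')
        simp [hab, this]
    have hgsingle : ∀ (c : Fin (h+1) → ℝ) (i : Fin (h+1)),
        (∑ j, c j • w j) ⬝ᵥ w i = c i := by
      intro c i
      rw [dot_sum_left]
      rw [Finset.sum_eq_single i]
      · rw [hw_ortho]; simp
      · intro j _ hne; rw [hw_ortho]; simp [hne]
      · simp
    have hw_li : LinearIndependent ℝ w := by
      rw [Fintype.linearIndependent_iff]
      intro g hg i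
      have hgs := hgsingle g i
      rw [hg, zero_dotProduct] at hgs
      exact hgs.symm
    have hWrank : Module.finrank ℝ (Submodule.span ℝ (Set.range w)) = h + 1 := by
      rw [finrank_span_eq_card hw_li, Fintype.card_fin]
    have htot : Module.finrank ℝ (Fin n → ℝ) = n := Module.finrank_fin_fun ℝ
    have hrn : B.rank + Module.finrank ℝ (LinearMap.ker B.mulVecLin) = n := by
      have h2 := LinearMap.finrank_range_add_finrank_ker B.mulVecLin
      rw [htot] at h2
      exact h2
    have hsupinf := Submodule.finrank_sup_add_finrank_inf_eq
      (Submodule.span ℝ (Set.range w)) (LinearMap.ker B.mulVecLin)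
    have hsup_le : Module.finrank ℝ
        (Submodule.span ℝ (Set.range w) ⊔ LinearMap.ker B.mulVecLin :
          Submodule ℝ (Fin n → ℝ)) ≤ n := by
      exact le_trans (Submodule.finrank_le _) (le_of_eq htot)
    have hinf_pos : 0 < Module.finrank ℝ
        (Submodule.span ℝ (Set.range w) ⊓ LinearMap.ker B.mulVecLin :
          Submodule ℝ (Fin n → ℝ)) := by omega
    have hne_bot : (Submodule.span ℝ (Set.range w) ⊓ LinearMap.ker B.mulVecLin :
        Submodule ℝ (Fin n → ℝ)) ≠ ⊥ := by
      intro hbot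
      rw [hbot, finrank_bot] at hinf_pos
      exact lt_irrefl 0 hinf_pos
    obtain ⟨x, hxWK, hx0⟩ := (Submodule.ne_bot_iff _).mp hne_bot
    have hxW : x ∈ Submodule.span ℝ (Set.range w) := hxWK.1
    have hxK : x ∈ LinearMap.ker B.mulVecLin := hxWK.2
    obtain ⟨c, hc⟩ := (Submodule.mem_span_range_iff_exists_fun ℝ).mp hxW
    have hBx : B *ᵥ x = 0 := hxK
    have hdiffx : (A - B) *ᵥ x = A *ᵥ x := by rw [Matrix.sub_mulVec, hBx, sub_zero]
    have hvx : ∀ j, v (e j) ⬝ᵥ x = c j := by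
      intro j
      rw [dotProduct_comm, ← hc]
      exact hgsingle c j
    have hvx0 : ∀ i : Fin n, i ∉ Finset.image e Finset.univ → v i ⬝ᵥ x = 0 := by
      intro i hi
      rw [dotProduct_comm, ← hc, dot_sum_left]
      apply Finset.sum_eq_zero
      intro j _
      have hne : e j ≠ i := fun hc' => hi (Finset.mem_image.mpr ⟨j, Finset.mem_univ _, hc'⟩)
      have : w j ⬝ᵥ v i = 0 := by rw [hw]; simp only []; rw [hv (e j) i]; simp [hne]
      rw [this, mul_zero]
    have hxx : x ⬝ᵥ x = ∑ j, c j ^ 2 := by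
      rw [← hc, dot_sum_ortho w hw_ortho]
      exact Finset.sum_congr rfl fun j _ => (sq _).symm
    have hxxpos : 0 < x ⬝ᵥ x := by
      rcases lt_or_eq_of_le (Finset.sum_nonneg fun i _ => mul_self_nonneg (x i)) with hp | hp
      · exact hp
      · exact absurd (dotProduct_self_eq_zero.mp hp.symm) hx0
    -- key inequality
    have hkey : σ ih ^ 2 * (x ⬝ᵥ x) ≤ (A *ᵥ x) ⬝ᵥ (A *ᵥ x) := by
      rw [hA, normsq]
      have e1 : σ ih ^ 2 * (x ⬝ᵥ x) = ∑ i ∈ Finset.image e Finset.univ,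
          σ ih ^ 2 * (v i ⬝ᵥ x) ^ 2 := by
        rw [Finset.sum_image (fun a _ b _ hab => he_inj hab)]
        rw [hxx, Finset.mul_sum]
        refine Finset.sum_congr rfl fun j _ => ?_
        rw [hvx j]
      rw [e1]
      calc ∑ i ∈ Finset.image e Finset.univ, σ ih ^ 2 * (v i ⬝ᵥ x) ^ 2
          ≤ ∑ i, σ ih ^ 2 * (v i ⬝ᵥ x) ^ 2 := by
            refine Finset.sum_le_sum_of_subset_of_nonneg (Finset.subset_univ _) ?_
            intro i _ _
            positivity
        _ ≤ ∑ i, (σ i * (v i ⬝ᵥ x)) ^ 2 := by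
            refine Finset.sum_le_sum fun i _ => ?_
            by_cases hi : i ∈ Finset.image e Finset.univ
            · obtain ⟨j, _, hj⟩ := Finset.mem_image.mp hi
              have hile : i ≤ ih := by
                rw [← hj]
                exact Fin.mk_le_of_le_val (Nat.lt_succ_iff.mp j.isLt)
              have hσle : σ ih ≤ σ i := hσ hile
              have hsq : σ ih ^ 2 ≤ σ i ^ 2 := pow_le_pow_left₀ (hσ0 ih) hσle 2
              calc σ ih ^ 2 * (v i ⬝ᵥ x) ^ 2 ≤ σ i ^ 2 * (v i ⬝ᵥ x) ^ 2 := by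
                    nlinarith [sq_nonneg (v i ⬝ᵥ x)]
                _ = (σ i * (v i ⬝ᵥ x)) ^ 2 := by ring
            · rw [hvx0 i hi]
              simp
    -- conclude
    have hfinal := opnorm_mulVec (A - B) x
    rw [hdiffx] at hfinal
    have hlow : σ ih * Real.sqrt (x ⬝ᵥ x) ≤ Real.sqrt ((A *ᵥ x) ⬝ᵥ (A *ᵥ x)) := by
      have := Real.sqrt_le_sqrt hkey
      rwa [Real.sqrt_mul (sq_nonneg _), Real.sqrt_sq (hσ0 ih)] at this
    have hs : 0 < Real.sqrt (x ⬝ᵥ x) := Real.sqrt_pos.mpr hxxpos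
    have := hlow.trans hfinal
    exact le_of_mul_le_mul_right (by linarith) hs
end

section
/- Let A be a real m×n matrix and Ψ a real k×n matrix with m ≥ n ≥ k, rank(Ψ) = k, and trivial intersection of the null spaces of A and Ψ. Then there exist matrices Ũ ∈ ℝ^{m×n} and Ṽ ∈ ℝ^{k×n} with orthonormal columns, an invertible matrix Y ∈ ℝ^{n×n}, a diagonal matrix Σ̃ ∈ ℝ^{n×n} with diagonal entries 0 ≤ σ̃_1 ≤ … ≤ σ̃_n ≤ 1, and a matrix Λ̃ ∈ ℝ^{k×n} consisting of a diagonal block with entries 1 ≥ λ̃_1 ≥ … ≥ λ̃_k ≥ 0 followed by k×(n−k) zeros, such that A = Ũ Σ̃ Yᵀ, Ψ = Ṽ Λ̃ Yᵀ, and σ̃_i² + λ̃_i² = 1 for 1 ≤ i ≤ k. -/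
open Matrix BigOperators

lemma ctr {p q : ℕ} (M : Matrix (Fin p) (Fin q) ℝ) : Mᴴ = Mᵀ := by
  ext i j; simp [conjTranspose_apply]

lemma exists_factor {p q : ℕ} (hq : q ≤ p) (B : Matrix (Fin p) (Fin q) ℝ) (c : Fin q → ℝ)
    (hBB : Bᵀ * B = Matrix.diagonal (fun i => c i ^ 2)) :
    ∃ U : Matrix (Fin p) (Fin q) ℝ, Uᵀ * U = 1 ∧ B = U * Matrix.diagonal c := by
  classical
  have hBB' : ∀ a b : Fin q, (∑ i, B i a * B i b) = (if a = b then c a ^ 2 else 0) := by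
    intro a b
    have := congrFun (congrFun hBB a) b
    simpa [Matrix.mul_apply, Matrix.diagonal_apply, Matrix.transpose_apply] using this
  let col : Fin q → EuclideanSpace ℝ (Fin p) := fun j => WithLp.toLp 2 (fun i => B i j)
  have hcol : ∀ a b : Fin q, inner ℝ (col a) (col b) = (if a = b then c a ^ 2 else (0:ℝ)) := by
    intro a b
    rw [← hBB' a b]
    simp [col, PiLp.inner_apply, RCLike.inner_apply, mul_comm]
  let v : Fin p → EuclideanSpace ℝ (Fin p) := fun j =>
    if h : (j : ℕ) < q then (c ⟨j, h⟩)⁻¹ • col ⟨j, h⟩ else 0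
  let s : Set (Fin p) := {j | ∃ h : (j : ℕ) < q, c ⟨j, h⟩ ≠ 0}
  have hon : Orthonormal ℝ (s.restrict v) := by
    rw [orthonormal_iff_ite]
    rintro ⟨a, ha', hca⟩ ⟨b, hb', hcb⟩
    have hva : v a = (c ⟨a, ha'⟩)⁻¹ • col ⟨a, ha'⟩ := dif_pos ha'
    have hvb : v b = (c ⟨b, hb'⟩)⁻¹ • col ⟨b, hb'⟩ := dif_pos hb'
    change inner ℝ (v a) (v b) = _
    simp only [Set.restrict_apply, hva, hvb, real_inner_smul_left, real_inner_smul_right,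
      hcol]
    by_cases hab : a = b
    · subst hab
      simp only [Subtype.mk.injEq, if_pos rfl, if_pos (rfl : a = a)]
      field_simp
      simp
    · have : (⟨a, ha'⟩ : Fin q) ≠ ⟨b, hb'⟩ := by
        intro h; exact hab (by simpa [Fin.ext_iff] using h)
      simp [Subtype.mk.injEq, hab, this]
  obtain ⟨bb, hbb⟩ := hon.exists_orthonormalBasis_extension_of_card_eq
    (by simp)
  refine ⟨Matrix.of fun i j => bb (Fin.castLE hq j) i, ?_, ?_⟩
  · ext a b
    have := (orthonormal_iff_ite.mp bb.orthonormal) (Fin.castLE hq a) (Fin.castLE hq b)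
    rw [PiLp.inner_apply] at this
    simp only [RCLike.inner_apply, conj_trivial] at this
    simp only [Fin.castLE_inj] at this
    simp only [Matrix.mul_apply, Matrix.transpose_apply, Matrix.of_apply, Matrix.one_apply]
    rw [← this]
    exact Finset.sum_congr rfl fun _ _ => mul_comm _ _
  · ext i j
    rw [Matrix.mul_diagonal]
    by_cases hcj : c j = 0
    · have hz : B i j = 0 := by
        have h0 : (∑ l, B l j * B l j) = 0 := by rw [hBB' j j]; simp [hcj]
        have := (Finset.sum_eq_zero_iff_of_nonneg (fun l _ => mul_self_nonneg (B l j))).mp h0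
          i (Finset.mem_univ i)
        exact mul_self_eq_zero.mp this
      simp [hz, hcj]
    · have hmem : Fin.castLE hq j ∈ s := ⟨j.isLt, by simpa using hcj⟩
      have hb := hbb (Fin.castLE hq j) hmem
      have hv : v (Fin.castLE hq j) = (c j)⁻¹ • col j := dif_pos j.isLt
      rw [hv] at hb
      have : bb (Fin.castLE hq j) i = (c j)⁻¹ * B i j := by
        rw [hb]; simp [col]
      rw [Matrix.of_apply, this]
      field_simp
/-- Existence of the generalized singular value decomposition (GSVD) of a pair `(A, Ψ)`
with `m ≥ n ≥ k`, `rank Ψ = k`, and trivially intersecting null spaces: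
`A = Ũ Σ̃ Yᵀ` and `Ψ = Ṽ Λ̃ Yᵀ` with `Ũ, Ṽ` having orthonormal columns, `Y` invertible,
`Σ̃ = diag(σ̃)` with `0 ≤ σ̃₁ ≤ … ≤ σ̃ₙ ≤ 1`, `Λ̃ = [diag(λ̃), 0] ∈ ℝ^{k×n}` with
`1 ≥ λ̃₁ ≥ … ≥ λ̃ₖ ≥ 0`, and `σ̃ᵢ² + λ̃ᵢ² = 1` for `1 ≤ i ≤ k`. -/
theorem gsvd_exists {m n k : ℕ} (hmn : n ≤ m) (hkn : k ≤ n)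
    (A : Matrix (Fin m) (Fin n) ℝ) (Ψ : Matrix (Fin k) (Fin n) ℝ)
    (hrank : Ψ.rank = k)
    (hnull : ∀ x : Fin n → ℝ, A.mulVec x = 0 → Ψ.mulVec x = 0 → x = 0) :
    ∃ (U : Matrix (Fin m) (Fin n) ℝ) (V : Matrix (Fin k) (Fin k) ℝ)
      (Y : Matrix (Fin n) (Fin n) ℝ) (σ : Fin n → ℝ) (lam : Fin k → ℝ),
      Uᵀ * U = 1 ∧ Vᵀ * V = 1 ∧ IsUnit Y ∧
      Monotone σ ∧ (∀ i, 0 ≤ σ i) ∧ (∀ i, σ i ≤ 1) ∧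
      Antitone lam ∧ (∀ i, 0 ≤ lam i) ∧ (∀ i, lam i ≤ 1) ∧
      A = U * Matrix.diagonal σ * Yᵀ ∧
      Ψ = V * (Matrix.of fun (i : Fin k) (j : Fin n) =>
            if (i : ℕ) = (j : ℕ) then lam i else 0) * Yᵀ ∧
      ∀ i : Fin k, σ (Fin.castLE hkn i) ^ 2 + lam i ^ 2 = 1 := by
  classical
  set S : Matrix (Fin n) (Fin n) ℝ := Aᵀ * A + Ψᵀ * Ψ with hSdef
  have hdot : ∀ {a : ℕ} (M : Matrix (Fin a) (Fin n) ℝ) (x : Fin n → ℝ),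
      x ⬝ᵥ (Mᵀ * M) *ᵥ x = (M *ᵥ x) ⬝ᵥ (M *ᵥ x) := by
    intro a M x
    rw [← Matrix.mulVec_mulVec, Matrix.dotProduct_mulVec, Matrix.vecMul_transpose]
  have hposd : ∀ {a : ℕ} (v : Fin a → ℝ), v ≠ 0 → 0 < v ⬝ᵥ v := by
    intro a v hv
    refine lt_of_le_of_ne (Finset.sum_nonneg fun i _ => mul_self_nonneg _) ?_
    intro h
    exact hv (dotProduct_self_eq_zero.mp h.symm)
  have hdnn : ∀ {a : ℕ} (v : Fin a → ℝ), 0 ≤ v ⬝ᵥ v :=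
    fun v => Finset.sum_nonneg fun i _ => mul_self_nonneg _
  have hS : S.PosDef := by
    refine Matrix.PosDef.of_dotProduct_mulVec_pos ?_ ?_
    · show Sᴴ = S
      rw [ctr]
      simp [hSdef, Matrix.transpose_add, Matrix.transpose_mul]
    · intro x hx
      have hsx : star x = x := by funext i; simp
      rw [hsx, hSdef, Matrix.add_mulVec, dotProduct_add, hdot A x, hdot Ψ x]
      by_cases hAx : A *ᵥ x = 0
      · have hΨx : Ψ *ᵥ x ≠ 0 := fun h => hx (hnull x hAx h)
        have := hposd _ hΨx
        have := hdnn (A *ᵥ x)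
        linarith
      · have := hposd _ hAx
        have := hdnn (Ψ *ᵥ x)
        linarith
  set L : Matrix (Fin n) (Fin n) ℝ := (open scoped MatrixOrder in CFC.sqrt S) with hLdef
  have hL2 : L * L = S := by
    open scoped MatrixOrder in
    exact CFC.sqrt_mul_sqrt_self S (Matrix.nonneg_iff_posSemidef.mpr hS.posSemidef)
  have hLT : Lᵀ = L := by rw [← ctr]; open scoped MatrixOrder in
    exact (Matrix.nonneg_iff_posSemidef.mp (CFC.sqrt_nonneg S)).1
  have hLdet : IsUnit L.det := by
    have h1 : L.det * L.det = S.det := by rw [← Matrix.det_mul, hL2]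
    have h2 : 0 < S.det := hS.det_pos
    refine isUnit_iff_ne_zero.mpr fun h => ?_
    rw [h, mul_zero] at h1
    linarith [h1 ▸ h2]
  set Li : Matrix (Fin n) (Fin n) ℝ := L⁻¹ with hLidef
  have hLLi : L * Li = 1 := Matrix.mul_nonsing_inv _ hLdet
  have hLiL : Li * L = 1 := Matrix.nonsing_inv_mul _ hLdet
  have hLiT : Liᵀ = Li := by rw [hLidef, Matrix.transpose_nonsing_inv, hLT]
  set C : Matrix (Fin n) (Fin n) ℝ := Li * (Ψᵀ * Ψ) * Li with hCdef
  have hCT : Cᵀ = C := by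
    rw [hCdef]
    simp only [Matrix.transpose_mul, hLiT, Matrix.transpose_transpose]
    simp only [Matrix.mul_assoc]
  have hCH : C.IsHermitian := by show Cᴴ = C; rw [ctr]; exact hCT
  set μ : Fin n → ℝ := hCH.eigenvalues with hμdef
  set W₀ : Matrix (Fin n) (Fin n) ℝ := (hCH.eigenvectorUnitary : Matrix (Fin n) (Fin n) ℝ)
    with hW₀def
  have hW₀1 : W₀ᵀ * W₀ = 1 := by
    rw [← ctr, ← Matrix.star_eq_conjTranspose]
    exact ((Unitary.mem_iff).mp hCH.eigenvectorUnitary.prop).1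
  have hW₀2 : W₀ * W₀ᵀ = 1 := mul_eq_one_comm.mp hW₀1
  have hspec : C = W₀ * Matrix.diagonal μ * W₀ᵀ := by
    have hd : (RCLike.ofReal ∘ hCH.eigenvalues : Fin n → ℝ) = μ := by
      funext i
      simp [hμdef]
    calc C = W₀ * Matrix.diagonal (RCLike.ofReal ∘ hCH.eigenvalues) * star W₀ :=
          hCH.spectral_theorem
      _ = W₀ * Matrix.diagonal μ * W₀ᵀ := by
          rw [hd, Matrix.star_eq_conjTranspose, ctr]
  have hCdiag : W₀ᵀ * C * W₀ = Matrix.diagonal μ := by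
    rw [hspec]
    simp only [← Matrix.mul_assoc]
    rw [hW₀1, one_mul, Matrix.mul_assoc _ W₀ᵀ W₀, hW₀1, mul_one]
  set ρ : Equiv.Perm (Fin n) := Fin.revPerm.trans (Tuple.sort μ) with hρdef
  set μs : Fin n → ℝ := fun j => μ (ρ j) with hμsdef
  have hμs_anti : Antitone μs := by
    intro a b hab
    have := Tuple.monotone_sort μ (Fin.rev_le_rev.mpr hab)
    simpa [hμsdef, hρdef] using this
  set W : Matrix (Fin n) (Fin n) ℝ := W₀.submatrix id ρ with hWdef
  have hWT : Wᵀ = W₀ᵀ.submatrix ρ id := Matrix.transpose_submatrix _ _ _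
  have hWW : Wᵀ * W = 1 := by
    rw [hWT, hWdef]
    have := Matrix.submatrix_mul_equiv W₀ᵀ W₀ (ρ : Fin n → Fin n) (Equiv.refl (Fin n))
      (ρ : Fin n → Fin n)
    simp only [Equiv.coe_refl] at this
    calc W₀ᵀ.submatrix (⇑ρ) id * W₀.submatrix id ⇑ρ
        = (W₀ᵀ * W₀).submatrix (⇑ρ) (⇑ρ) := this
      _ = (1 : Matrix (Fin n) (Fin n) ℝ).submatrix (⇑ρ) (⇑ρ) := by rw [hW₀1]
      _ = 1 := Matrix.submatrix_one_equiv ρ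
  have hWWT : W * Wᵀ = 1 := mul_eq_one_comm.mp hWW
  have hsub : Wᵀ * C * W = (W₀ᵀ * C * W₀).submatrix ρ ρ := by
    ext i j
    simp [hWT, hWdef, Matrix.mul_apply, Matrix.submatrix_apply]
  have hdiagsub : (Matrix.diagonal μ).submatrix ρ ρ = Matrix.diagonal μs := by
    ext i j
    by_cases h : i = j
    · subst h; simp [hμsdef]
    · have : ρ i ≠ ρ j := fun hh => h (ρ.injective hh)
      simp [Matrix.diagonal_apply, h, this]
  have hWCW : Wᵀ * C * W = Matrix.diagonal μs := by rw [hsub, hCdiag, hdiagsub]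
  set Yt : Matrix (Fin n) (Fin n) ℝ := Wᵀ * L with hYtdef
  set Z : Matrix (Fin n) (Fin n) ℝ := Li * W with hZdef
  have hZ1 : Yt * Z = 1 := by
    rw [hYtdef, hZdef, Matrix.mul_assoc, ← Matrix.mul_assoc L, hLLi, one_mul, hWW]
  have hZ2 : Z * Yt = 1 := by
    rw [hYtdef, hZdef, Matrix.mul_assoc, ← Matrix.mul_assoc W, hWWT, one_mul, hLiL]
  have hZT : Zᵀ = Wᵀ * Li := by
    rw [hZdef, Matrix.transpose_mul, hLiT]
  set G : Matrix (Fin m) (Fin n) ℝ := A * Z with hGdef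
  set H : Matrix (Fin k) (Fin n) ℝ := Ψ * Z with hHdef
  have hLiSLi : Li * S * Li = 1 := by
    rw [← hL2, ← Matrix.mul_assoc, hLiL, one_mul, hLLi]
  have hAA : Aᵀ * A = S - Ψᵀ * Ψ := by rw [hSdef, add_sub_cancel_right]
  have hmid : Li * (S - Ψᵀ * Ψ) * Li = 1 - C := by
    rw [Matrix.mul_sub, Matrix.sub_mul, hLiSLi, hCdef]
  have hone : Wᵀ * (1 - C) * W = 1 - Matrix.diagonal μs := by
    rw [Matrix.mul_sub, Matrix.sub_mul, Matrix.mul_one, hWW, hWCW]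
  have hGG : Gᵀ * G = Matrix.diagonal (fun i => 1 - μs i) := by
    have : Gᵀ * G = Wᵀ * (Li * (Aᵀ * A) * Li) * W := by
      rw [hGdef, Matrix.transpose_mul, hZT]
      simp only [Matrix.mul_assoc, hZdef]
    rw [this, hAA, hmid, hone, ← Matrix.diagonal_one, Matrix.diagonal_sub]
  have hHH : Hᵀ * H = Matrix.diagonal μs := by
    have : Hᵀ * H = Wᵀ * (Li * (Ψᵀ * Ψ) * Li) * W := by
      rw [hHdef, Matrix.transpose_mul, hZT]
      simp only [Matrix.mul_assoc, hZdef]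
    rw [this, ← hCdef, hWCW]
  have hμs1 : ∀ i, μs i ≤ 1 := by
    intro i
    have h := congrFun (congrFun hGG i) i
    simp only [Matrix.mul_apply, Matrix.transpose_apply, Matrix.diagonal_apply_eq] at h
    have : (0:ℝ) ≤ ∑ l, G l i * G l i := Finset.sum_nonneg fun l _ => mul_self_nonneg _
    linarith [h ▸ this]
  have hμs0 : ∀ i, 0 ≤ μs i := by
    intro i
    have h := congrFun (congrFun hHH i) i
    simp only [Matrix.mul_apply, Matrix.transpose_apply, Matrix.diagonal_apply_eq] at h
    have : (0:ℝ) ≤ ∑ l, H l i * H l i := Finset.sum_nonneg fun l _ => mul_self_nonneg _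
    linarith [h ▸ this]
  have hcard : Fintype.card {i // μ i ≠ 0} ≤ k := by
    have h1 : C.rank ≤ Ψ.rank := by
      calc C.rank ≤ (Li * (Ψᵀ * Ψ)).rank := Matrix.rank_mul_le_left _ _
        _ ≤ (Ψᵀ * Ψ).rank := Matrix.rank_mul_le_right _ _
        _ = Ψ.rank := Matrix.rank_transpose_mul_self _
    have h2 := hCH.rank_eq_card_non_zero_eigs
    rw [← h2]
    rw [hrank] at h1
    exact h1
  have hμszero : ∀ j : Fin n, k ≤ (j : ℕ) → μs j = 0 := by
    intro j hj
    by_contra hne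
    have hpos : 0 < μs j := lt_of_le_of_ne (hμs0 j) (Ne.symm hne)
    have hkn' : k + 1 ≤ n := by omega
    have hμne : ∀ a : Fin (k+1), μ (ρ (Fin.castLE hkn' a)) ≠ 0 := by
      intro a
      have hai := a.isLt
      have hle : (Fin.castLE hkn' a) ≤ j := by
        rw [Fin.le_def]
        simp only [Fin.coe_castLE]
        omega
      exact (lt_of_lt_of_le hpos (hμs_anti hle)).ne'
    let f : Fin (k+1) → {i // μ i ≠ 0} := fun a => ⟨ρ (Fin.castLE hkn' a), hμne a⟩
    have hfinj : Function.Injective f := by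
      intro a b hab
      rw [Subtype.ext_iff] at hab
      have h2 : Fin.castLE hkn' a = Fin.castLE hkn' b := ρ.injective hab
      rwa [Fin.castLE_inj] at h2
    have := Fintype.card_le_of_injective f hfinj
    simp only [Fintype.card_fin] at this
    omega
  set σ : Fin n → ℝ := fun i => Real.sqrt (1 - μs i) with hσdef
  set lam : Fin k → ℝ := fun i => Real.sqrt (μs (Fin.castLE hkn i)) with hlamdef
  have hσsq : ∀ i, σ i ^ 2 = 1 - μs i := fun i => Real.sq_sqrt (by linarith [hμs1 i])
  have hlamsq : ∀ i, lam i ^ 2 = μs (Fin.castLE hkn i) := fun i => Real.sq_sqrt (hμs0 _)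
  obtain ⟨U, hU, hGU⟩ := exists_factor hmn G σ (by
    rw [hGG]
    exact congrArg _ (funext fun i => (hσsq i).symm))
  set Hk : Matrix (Fin k) (Fin k) ℝ := H.submatrix id (Fin.castLE hkn) with hHkdef
  have hHkHk : Hkᵀ * Hk = Matrix.diagonal (fun i => lam i ^ 2) := by
    ext a b
    have h := congrFun (congrFun hHH (Fin.castLE hkn a)) (Fin.castLE hkn b)
    simp only [Matrix.mul_apply, Matrix.transpose_apply, Matrix.diagonal_apply,
      Fin.castLE_inj] at h
    simp only [Matrix.mul_apply, Matrix.transpose_apply, Matrix.submatrix_apply,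
      Matrix.diagonal_apply, id_eq, hHkdef]
    rw [h]
    by_cases hab : a = b
    · subst hab; simp [hlamsq a]
    · simp [hab]
  obtain ⟨V, hV, hHkV⟩ := exists_factor (le_refl k) Hk lam hHkHk
  have hHzero : ∀ (i : Fin k) (j : Fin n), k ≤ (j : ℕ) → H i j = 0 := by
    intro i j hj
    have h := congrFun (congrFun hHH j) j
    simp only [Matrix.mul_apply, Matrix.transpose_apply, Matrix.diagonal_apply_eq] at h
    rw [hμszero j hj] at h
    have := (Finset.sum_eq_zero_iff_of_nonneg
      (fun l _ => mul_self_nonneg (H l j))).mp h i (Finset.mem_univ i)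
    exact mul_self_eq_zero.mp this
  have hHfull : H = V * (Matrix.of fun (i : Fin k) (j : Fin n) =>
      if (i : ℕ) = (j : ℕ) then lam i else 0) := by
    ext i j
    rw [Matrix.mul_apply]
    by_cases hj : (j : ℕ) < k
    · set j' : Fin k := ⟨(j : ℕ), hj⟩ with hj'def
      have hsum : (∑ l, V i l * (Matrix.of fun (i : Fin k) (j : Fin n) =>
          if (i : ℕ) = (j : ℕ) then lam i else 0) l j) = V i j' * lam j' := by
        rw [Finset.sum_eq_single j']
        · simp [hj'def]
        · intro l _ hl
          have : ((l : ℕ) ≠ (j : ℕ)) := fun hh => hl (Fin.ext (by simp [hj'def, hh]))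
          simp [this]
        · intro h; exact absurd (Finset.mem_univ _) h
      rw [hsum]
      have hcast : Fin.castLE hkn j' = j := Fin.ext rfl
      have h2 : H i j = (V * Matrix.diagonal lam) i j' := by
        rw [← hHkV, hHkdef]
        simp [Matrix.submatrix_apply, hcast]
      rw [h2, Matrix.mul_diagonal]
    · rw [hHzero i j (le_of_not_gt hj)]
      symm
      apply Finset.sum_eq_zero
      intro l _
      have : ((l : ℕ) ≠ (j : ℕ)) := by omega
      simp [this]
  refine ⟨U, V, Ytᵀ, σ, lam, hU, hV, ?_, ?_, fun i => Real.sqrt_nonneg _, ?_, ?_,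
    fun i => Real.sqrt_nonneg _, ?_, ?_, ?_, ?_⟩
  · have hdet1 : Yt.det * Z.det = 1 := by rw [← Matrix.det_mul, hZ1, Matrix.det_one]
    refine (Matrix.isUnit_iff_isUnit_det _).mpr ?_
    rw [Matrix.det_transpose]
    exact IsUnit.of_mul_eq_one _ hdet1
  · intro a b hab
    exact Real.sqrt_le_sqrt (by linarith [hμs_anti hab])
  · intro i
    rw [hσdef]
    exact Real.sqrt_le_one.mpr (by linarith [hμs0 i])
  · intro a b hab
    refine Real.sqrt_le_sqrt (hμs_anti ?_)
    rw [Fin.le_def]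
    simpa using hab
  · intro i
    exact Real.sqrt_le_one.mpr (hμs1 _)
  · rw [Matrix.transpose_transpose]
    calc A = (A * Z) * Yt := by rw [Matrix.mul_assoc, hZ2, Matrix.mul_one]
      _ = U * Matrix.diagonal σ * Yt := by rw [← hGdef, hGU]
  · rw [Matrix.transpose_transpose]
    calc Ψ = (Ψ * Z) * Yt := by rw [Matrix.mul_assoc, hZ2, Matrix.mul_one]
      _ = V * (Matrix.of fun (i : Fin k) (j : Fin n) =>
            if (i : ℕ) = (j : ℕ) then lam i else 0) * Yt := by rw [← hHdef, hHfull]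
  · intro i
    rw [hσsq, hlamsq]
    ring
end
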